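/- Let α, β and α₁, β₁ be two pairs of nonzero complex numbers with |α|² + |β|² = 1 = |α₁|² + |β₁|². Then T_{α,β} and T_{α₁,β₁} are unitarily equivalent (i.e., there exists a unitary operator U on H with U T_{α,β} = T_{α₁,β₁} U) if and only if |α| = |α₁|, |β| = |β₁|, and α·conj(β) = α₁·conj(β₁) (equivalently α/α₁ = conj(β₁)/conj(β)). -/

import Mathlib

open scoped ComplexConjugate
open scoped ENNReal

noncomputable section

/-- The Hilbert space `H = ℓ²(ℕ, ℂ)`. -/
abbrev H : Type := lp (fun _ : ℕ => ℂ) 2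

/-- The standard orthonormal basis vectors of `ℓ²(ℕ, ℂ)`. -/
noncomputable def e (n : ℕ) : H := lp.single 2 n (1 : ℂ)

lemma e_apply (n k : ℕ) : (e n : ℕ → ℂ) k = if k = n then 1 else 0 := by
  simp [e, lp.single_apply, Pi.single_apply]

lemma coe_add_apply' (f g : H) (k : ℕ) : ((f + g : H) : ℕ → ℂ) k = (f : ℕ → ℂ) k + (g : ℕ → ℂ) k := rfl

lemma coe_smul_apply' (c : ℂ) (f : H) (k : ℕ) : ((c • f : H) : ℕ → ℂ) k = c * (f : ℕ → ℂ) k := rfl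

lemma two_toReal : ((2 : ℝ≥0∞)).toReal = (2:ℝ) := by norm_num

lemma hasSum_sq (f : H) : HasSum (fun i => ‖(f : ℕ → ℂ) i‖ ^ 2) (‖f‖ ^ 2) := by
  have := lp.hasSum_norm (p := 2) (by norm_num) f
  simpa [two_toReal, Real.rpow_two] using this

lemma inner_e (k : ℕ) (f : H) : (inner ℂ (e k) f : ℂ) = (f : ℕ → ℂ) k := by
  simp [e, lp.inner_single_left, RCLike.inner_apply]

lemma norm_e (n : ℕ) : ‖e n‖ = 1 := by
  simpa [e] using lp.norm_single (p := 2) (E := fun _ : ℕ => ℂ) (by norm_num) n (1:ℂ)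

lemma apply_repr (A : H →L[ℂ] H) (x : H) (k : ℕ) :
    HasSum (fun n => (x : ℕ → ℂ) n * (A (e n) : ℕ → ℂ) k) ((A x : ℕ → ℂ) k) := by
  have h0 : HasSum (fun n => lp.single 2 n ((x : ℕ → ℂ) n)) x :=
    lp.hasSum_single (by norm_num) x
  have hfe : ∀ n : ℕ, lp.single 2 n ((x : ℕ → ℂ) n) = (x : ℕ → ℂ) n • e n := by
    intro n
    rw [e, ← lp.single_smul]
    norm_num
  rw [funext hfe] at h0
  have h2 : HasSum (fun n => (x : ℕ → ℂ) n • A (e n)) (A x) := by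
    simpa using A.hasSum h0
  have h3 := (innerSL ℂ (e k)).hasSum h2
  simpa [inner_e, inner_smul_right, smul_eq_mul] using h3

lemma coordsA (A : H →L[ℂ] H) (a b : ℂ)
    (hA0 : A (e 0) = a • e 0 + b • e 1)
    (hAn : ∀ n : ℕ, 1 ≤ n → A (e n) = e (n + 1)) (x : H) :
    (A x : ℕ → ℂ) 0 = a * (x : ℕ → ℂ) 0 ∧ (A x : ℕ → ℂ) 1 = b * (x : ℕ → ℂ) 0 ∧
      ∀ j : ℕ, (A x : ℕ → ℂ) (j + 2) = (x : ℕ → ℂ) (j + 1) := by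
  have hAe : ∀ n : ℕ, 1 ≤ n → ∀ k, (A (e n) : ℕ → ℂ) k = if k = n + 1 then 1 else 0 := by
    intro n hn k; rw [hAn n hn, e_apply]
  have hA0c : ∀ k, (A (e 0) : ℕ → ℂ) k = a * ((e 0 : ℕ → ℂ) k) + b * ((e 1 : ℕ → ℂ) k) := by
    intro k
    rw [hA0]
    simp [coe_add_apply', coe_smul_apply', lp.coeFn_add, lp.coeFn_smul, Pi.smul_apply, smul_eq_mul]
  refine ⟨?_, ?_, ?_⟩
  · refine (apply_repr A x 0).unique ?_
    have h := hasSum_single (f := fun n => (x : ℕ → ℂ) n * (A (e n) : ℕ → ℂ) 0) 0 ?_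
    · simpa [hA0c, e_apply, mul_comm] using h
    · intro n hn
      simp [hAe n (Nat.one_le_iff_ne_zero.2 hn)]
  · refine (apply_repr A x 1).unique ?_
    have h := hasSum_single (f := fun n => (x : ℕ → ℂ) n * (A (e n) : ℕ → ℂ) 1) 0 ?_
    · simpa [hA0c, e_apply, mul_comm] using h
    · intro n hn
      have hne : ¬ ((1:ℕ) = n + 1) := by omega
      simp [hAe n (Nat.one_le_iff_ne_zero.2 hn), hne, hn]
  · intro j
    refine (apply_repr A x (j + 2)).unique ?_
    have h := hasSum_single (f := fun n => (x : ℕ → ℂ) n * (A (e n) : ℕ → ℂ) (j + 2)) (j + 1) ?_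
    · simpa [hAe (j+1) (by omega)] using h
    · intro n hn
      rcases Nat.eq_zero_or_pos n with h0 | h1
      · subst h0; simp [hA0c, e_apply]
      · have hne : ¬ (j + 2 = n + 1) := by omega
        simp [hAe n h1, hne]

lemma key_norm (A : H →L[ℂ] H) (a b : ℂ)
    (hA0 : A (e 0) = a • e 0 + b • e 1)
    (hAn : ∀ n : ℕ, 1 ≤ n → A (e n) = e (n + 1)) (x : H) :
    ‖A x‖ ^ 2 = ‖x‖ ^ 2 - (1 - ‖a‖ ^ 2 - ‖b‖ ^ 2) * ‖(x : ℕ → ℂ) 0‖ ^ 2 := by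
  obtain ⟨h0, h1, h2⟩ := coordsA A a b hA0 hAn x
  have hx := hasSum_sq x
  have hAx := hasSum_sq (A x)
  have hx' : HasSum (fun j => ‖(x : ℕ → ℂ) (j + 1)‖ ^ 2)
      (‖x‖ ^ 2 - ∑ i ∈ Finset.range 1, ‖(x : ℕ → ℂ) i‖ ^ 2) :=
    (hasSum_nat_add_iff' 1).2 hx
  have hAx' : HasSum (fun j => ‖(A x : ℕ → ℂ) (j + 2)‖ ^ 2)
      (‖A x‖ ^ 2 - ∑ i ∈ Finset.range 2, ‖(A x : ℕ → ℂ) i‖ ^ 2) :=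
    (hasSum_nat_add_iff' 2).2 hAx
  have hfun : (fun j => ‖(A x : ℕ → ℂ) (j + 2)‖ ^ 2) = fun j => ‖(x : ℕ → ℂ) (j + 1)‖ ^ 2 :=
    funext fun j => by rw [h2 j]
  rw [hfun] at hAx'
  have hu := hAx'.unique hx'
  simp only [Finset.sum_range_succ, Finset.sum_range_one, h0, h1, norm_mul, mul_pow] at hu
  linear_combination hu

lemma conc (f : H) (k : ℕ) (hk : ‖(f : ℕ → ℂ) k‖ = ‖f‖) :
    ∀ j : ℕ, j ≠ k → (f : ℕ → ℂ) j = 0 := by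
  intro j hj
  have hs := hasSum_sq f
  have hle : ‖(f : ℕ → ℂ) k‖ ^ 2 + ‖(f : ℕ → ℂ) j‖ ^ 2 ≤ ‖f‖ ^ 2 := by
    have h := sum_le_hasSum ({k, j} : Finset ℕ) (fun i _ => by positivity) hs
    simpa [Finset.sum_pair (Ne.symm hj)] using h
  have hk2 : ‖(f : ℕ → ℂ) k‖ ^ 2 = ‖f‖ ^ 2 := by rw [hk]
  have h0 : ‖(f : ℕ → ℂ) j‖ = 0 := by
    nlinarith [norm_nonneg ((f : ℕ → ℂ) j)]
  simpa using h0

lemma dense_span_e : Dense (↑(Submodule.span ℂ (Set.range e)) : Set H) := by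
  intro x
  have h0 : HasSum (fun n => lp.single 2 n ((x : ℕ → ℂ) n)) x :=
    lp.hasSum_single (by norm_num) x
  refine mem_closure_of_tendsto h0 (Filter.Eventually.of_forall ?_)
  intro s
  refine Submodule.sum_mem _ fun i _ => ?_
  have : lp.single 2 i ((x : ℕ → ℂ) i) = (x : ℕ → ℂ) i • e i := by
    rw [e, ← lp.single_smul]; norm_num
  rw [this]
  exact Submodule.smul_mem _ _ (Submodule.subset_span ⟨i, rfl⟩)

lemma memD (d : ℕ → ℂ) (hd : ∀ n, ‖d n‖ = 1) (x : H) :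
    Memℓp (fun n => d n * (x : ℕ → ℂ) n) 2 := by
  apply memℓp_gen
  have hs : Summable (fun n => ‖(x : ℕ → ℂ) n‖ ^ (2:ℝ≥0∞).toReal) :=
    (memℓp_gen_iff (by norm_num)).1 (lp.memℓp x)
  exact hs.congr fun n => by rw [norm_mul, hd, one_mul]

/-- The diagonal unitary with unimodular entries `d`. -/
def diagU (d : ℕ → ℂ) (hd : ∀ n, ‖d n‖ = 1) : H ≃ₗᵢ[ℂ] H where
  toFun := fun x => ⟨fun n => d n * (x : ℕ → ℂ) n, memD d hd x⟩
  invFun := fun x => ⟨fun n => (d n)⁻¹ * (x : ℕ → ℂ) n,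
    memD _ (fun n => by rw [norm_inv, hd, inv_one]) x⟩
  map_add' := fun x y => by
    apply lp.ext
    funext n
    simp only [lp.coeFn_add, Pi.add_apply]
    exact mul_add _ _ _
  map_smul' := fun c x => by
    apply lp.ext
    funext n
    simp only [lp.coeFn_smul, Pi.smul_apply, smul_eq_mul, RingHom.id_apply]
    ring
  left_inv := fun x => by
    apply lp.ext
    funext n
    have hdn : d n ≠ 0 := by
      intro h; have := hd n; rw [h] at this; simp at this
    exact inv_mul_cancel_left₀ hdn _
  right_inv := fun x => by
    apply lp.ext
    funext n
    have hdn : d n ≠ 0 := by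
      intro h; have := hd n; rw [h] at this; simp at this
    exact mul_inv_cancel_left₀ hdn _
  norm_map' := fun x => by
    rw [lp.norm_eq_tsum_rpow (by norm_num) , lp.norm_eq_tsum_rpow (p := 2) (by norm_num) x]
    congr 1
    apply tsum_congr
    intro n
    show ‖d n * (x : ℕ → ℂ) n‖ ^ (2:ℝ≥0∞).toReal = ‖(x : ℕ → ℂ) n‖ ^ (2:ℝ≥0∞).toReal
    rw [norm_mul, hd, one_mul]

lemma diagU_apply (d : ℕ → ℂ) (hd : ∀ n, ‖d n‖ = 1) (x : H) (n : ℕ) :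
    ((diagU d hd x : H) : ℕ → ℂ) n = d n * (x : ℕ → ℂ) n := rfl

lemma diagU_e (d : ℕ → ℂ) (hd : ∀ n, ‖d n‖ = 1) (n : ℕ) :
    diagU d hd (e n) = d n • e n := by
  apply lp.ext
  funext k
  rw [diagU_apply]
  simp only [lp.coeFn_smul, Pi.smul_apply, smul_eq_mul, e_apply]
  by_cases h : k = n
  · subst h; simp
  · simp [h]

lemma sq_eq_aux {a b : ℝ} (ha : 0 ≤ a) (hb : 0 ≤ b) (h : a ^ 2 = b ^ 2) : a = b := by
  nlinarith [sq_nonneg (a - b), sq_nonneg (a + b)]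

lemma pow4_eq_aux {a b : ℝ} (ha : 0 ≤ a) (hb : 0 ≤ b) (h : (a ^ 2) ^ 2 = (b ^ 2) ^ 2) : a = b :=
  sq_eq_aux ha hb (sq_eq_aux (by positivity) (by positivity) h)

set_option maxHeartbeats 1000000 in
/-- `T_{α,β}` and `T_{α₁,β₁}` are unitarily equivalent iff `|α| = |α₁|`, `|β| = |β₁|`
and `α·conj β = α₁·conj β₁`. -/
theorem T_unitary_equivalence (α β α₁ β₁ : ℂ)
    (hα : α ≠ 0) (hβ : β ≠ 0) (hα₁ : α₁ ≠ 0) (hβ₁ : β₁ ≠ 0)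
    (hnorm : ‖α‖ ^ 2 + ‖β‖ ^ 2 = 1)
    (hnorm₁ : ‖α₁‖ ^ 2 + ‖β₁‖ ^ 2 = 1)
    (T T₁ : H →L[ℂ] H)
    (hT0 : T (e 0) = (α * conj β) • e 0 + β • e 1)
    (hTn : ∀ n : ℕ, 1 ≤ n → T (e n) = e (n + 1))
    (hT₁0 : T₁ (e 0) = (α₁ * conj β₁) • e 0 + β₁ • e 1)
    (hT₁n : ∀ n : ℕ, 1 ≤ n → T₁ (e n) = e (n + 1)) :
    (∃ U : H ≃ₗᵢ[ℂ] H, ∀ x : H, U (T x) = T₁ (U x)) ↔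
      (‖α‖ = ‖α₁‖ ∧ ‖β‖ = ‖β₁‖ ∧
        α * conj β = α₁ * conj β₁) := by
  have hn : ‖α‖ ^ 2 + ‖β‖ ^ 2 = 1 := by simpa using hnorm
  have hn₁ : ‖α₁‖ ^ 2 + ‖β₁‖ ^ 2 = 1 := by simpa using hnorm₁
  constructor
  · rintro ⟨U, hUT⟩
    have hTkey : ∀ x : H, ‖T x‖ ^ 2 = ‖x‖ ^ 2 - (‖α‖ ^ 2) ^ 2 * ‖(x : ℕ → ℂ) 0‖ ^ 2 := by
      intro x
      rw [key_norm T (α * conj β) β hT0 hTn x, norm_mul, RCLike.norm_conj]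
      linear_combination (‖(x : ℕ → ℂ) 0‖ ^ 2 * (1 + ‖α‖ ^ 2)) * hn
    have hT₁key : ∀ x : H, ‖T₁ x‖ ^ 2 = ‖x‖ ^ 2 - (‖α₁‖ ^ 2) ^ 2 * ‖(x : ℕ → ℂ) 0‖ ^ 2 := by
      intro x
      rw [key_norm T₁ (α₁ * conj β₁) β₁ hT₁0 hT₁n x, norm_mul, RCLike.norm_conj]
      linear_combination (‖(x : ℕ → ℂ) 0‖ ^ 2 * (1 + ‖α₁‖ ^ 2)) * hn₁
    have hKey : ∀ x : H, (‖α‖ ^ 2) ^ 2 * ‖(x : ℕ → ℂ) 0‖ ^ 2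
        = (‖α₁‖ ^ 2) ^ 2 * ‖((U x : H) : ℕ → ℂ) 0‖ ^ 2 := by
      intro x
      have h1 := hTkey x
      have h2 := hT₁key (U x)
      have h3 : ‖T₁ (U x)‖ = ‖T x‖ := by rw [← hUT x]; exact U.norm_map _
      have h4 : ‖U x‖ = ‖x‖ := U.norm_map x
      rw [h3, h4] at h2
      linarith
    have h5 := hKey (e 0)
    have h6 := hKey (U.symm (e 0))
    rw [U.apply_symm_apply] at h6
    have e00 : ‖((e 0 : H) : ℕ → ℂ) 0‖ = 1 := by rw [e_apply]; simp
    rw [e00] at h5 h6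
    have hc1 : ‖((U (e 0) : H) : ℕ → ℂ) 0‖ ≤ 1 := by
      have h := lp.norm_apply_le_norm (p := 2) (by norm_num) (U (e 0)) 0
      rwa [U.norm_map, norm_e] at h
    have hc2 : ‖((U.symm (e 0) : H) : ℕ → ℂ) 0‖ ≤ 1 := by
      have h := lp.norm_apply_le_norm (p := 2) (by norm_num) (U.symm (e 0)) 0
      rwa [U.symm.norm_map, norm_e] at h
    have hA0 : (0:ℝ) < ‖α‖ := norm_pos_iff.2 hα
    have hA0' : (0:ℝ) < ‖α₁‖ := norm_pos_iff.2 hα₁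
    have hcc1 : (0:ℝ) ≤ ‖((U (e 0) : H) : ℕ → ℂ) 0‖ := norm_nonneg _
    have hcc2 : (0:ℝ) ≤ ‖((U.symm (e 0) : H) : ℕ → ℂ) 0‖ := norm_nonneg _
    have t2le : ‖((U (e 0) : H) : ℕ → ℂ) 0‖ ^ 2 ≤ 1 := pow_le_one₀ hcc1 hc1
    have s2le : ‖((U.symm (e 0) : H) : ℕ → ℂ) 0‖ ^ 2 ≤ 1 := pow_le_one₀ hcc2 hc2
    have hB1 : (0:ℝ) ≤ (‖α₁‖ ^ 2) ^ 2 := by positivity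
    have hB0 : (0:ℝ) ≤ (‖α‖ ^ 2) ^ 2 := by positivity
    have hle1 : (‖α‖ ^ 2) ^ 2 ≤ (‖α₁‖ ^ 2) ^ 2 := by
      have := mul_le_mul_of_nonneg_left t2le hB1
      linarith
    have hle2 : (‖α₁‖ ^ 2) ^ 2 ≤ (‖α‖ ^ 2) ^ 2 := by
      have := mul_le_mul_of_nonneg_left s2le hB0
      linarith
    have hcacb : (‖α‖ ^ 2) ^ 2 = (‖α₁‖ ^ 2) ^ 2 := le_antisymm hle1 hle2
    have habsα : ‖α‖ = ‖α₁‖ := pow4_eq_aux (norm_nonneg α) (norm_nonneg α₁) hcacb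
    have habsβ : ‖β‖ = ‖β₁‖ := by
      refine sq_eq_aux (norm_nonneg β) (norm_nonneg β₁) ?_
      have hh : ‖α‖ ^ 2 = ‖α₁‖ ^ 2 := by rw [habsα]
      linarith
    have hCBpos : (0:ℝ) < (‖α₁‖ ^ 2) ^ 2 := by positivity
    have ht2 : ‖((U (e 0) : H) : ℕ → ℂ) 0‖ ^ 2 = 1 := by
      rw [hcacb] at h5
      have hy := mul_left_cancel₀ (ne_of_gt hCBpos) h5
      rw [one_pow] at hy
      linarith
    have hc : ‖((U (e 0) : H) : ℕ → ℂ) 0‖ = 1 :=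
      sq_eq_aux hcc1 zero_le_one (by rw [ht2]; norm_num)
    have hU0 : U (e 0) = (((U (e 0) : H) : ℕ → ℂ) 0) • e 0 := by
      apply lp.ext
      funext j
      by_cases hj : j = 0
      · subst hj; simp [lp.coeFn_smul, Pi.smul_apply, smul_eq_mul, e_apply]
      · rw [conc (U (e 0)) 0 (by rw [U.norm_map, norm_e, hc]) j hj]
        simp [lp.coeFn_smul, Pi.smul_apply, smul_eq_mul, e_apply, hj]
    set c : ℂ := ((U (e 0) : H) : ℕ → ℂ) 0 with hcdef
    have hE : (α * conj β) • U (e 0) + β • U (e 1)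
        = c • ((α₁ * conj β₁) • e 0 + β₁ • e 1) := by
      calc (α * conj β) • U (e 0) + β • U (e 1) = U (T (e 0)) := by
            rw [hT0, map_add, map_smul, map_smul]
        _ = T₁ (U (e 0)) := hUT _
        _ = T₁ (c • e 0) := by rw [hU0]
        _ = c • T₁ (e 0) := map_smul _ _ _
        _ = c • ((α₁ * conj β₁) • e 0 + β₁ • e 1) := by rw [hT₁0]
    rw [hU0] at hE
    have hE1 : β * ((U (e 1) : H) : ℕ → ℂ) 1 = c * β₁ := by
      have h := congrArg (fun f : H => (f : ℕ → ℂ) 1) hE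
      simpa [coe_add_apply', coe_smul_apply', lp.coeFn_add, lp.coeFn_smul, Pi.add_apply, Pi.smul_apply, smul_eq_mul,
        e_apply] using h
    have hUe11 : ‖((U (e 1) : H) : ℕ → ℂ) 1‖ = 1 := by
      have h := congrArg (‖·‖) hE1
      simp only [norm_mul, hc, one_mul] at h
      have hbne : ‖β₁‖ ≠ 0 := norm_ne_zero_iff.2 hβ₁
      rw [habsβ] at h
      exact mul_left_cancel₀ hbne (by rw [h, mul_one])
    have hU10 : ((U (e 1) : H) : ℕ → ℂ) 0 = 0 :=
      conc (U (e 1)) 1 (by rw [hUe11, U.norm_map, norm_e]) 0 (by norm_num)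
    have hc0 : c ≠ 0 := by
      intro h
      rw [h] at hc
      simp at hc
    have h0c := congrArg (fun f : H => (f : ℕ → ℂ) 0) hE
    simp [coe_add_apply', coe_smul_apply', lp.coeFn_add, lp.coeFn_smul, Pi.add_apply, Pi.smul_apply, smul_eq_mul,
      e_apply, hU10] at h0c
    have hphase : α * conj β = α₁ * conj β₁ := by
      have h' : (α * conj β) * c = (α₁ * conj β₁) * c := by linear_combination h0c
      exact mul_right_cancel₀ hc0 h'
    exact ⟨habsα,
      habsβ, hphase⟩
  · rintro ⟨ha, hb, hphase⟩
    have habsβ : ‖β‖ = ‖β₁‖ := hb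
    set d : ℕ → ℂ := fun n => if n = 0 then (1:ℂ) else β₁ / β with hddef
    have hd : ∀ n, ‖d n‖ = 1 := by
      intro n
      by_cases h : n = 0
      · simp [hddef, h]
      · have hbne : ‖β‖ ≠ 0 := norm_ne_zero_iff.2 hβ
        simp only [hddef, h, if_false, norm_div, ← habsβ]
        exact div_self hbne
    refine ⟨diagU d hd, ?_⟩
    have hbase : ∀ n : ℕ, diagU d hd (T (e n)) = T₁ (diagU d hd (e n)) := by
      intro n
      match n with
      | 0 =>
        rw [hT0, map_add, map_smul, map_smul, diagU_e d hd 0, diagU_e d hd 1]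
        have hd0 : d 0 = 1 := by simp [hddef]
        have hd1 : d 1 = β₁ / β := by simp [hddef]
        rw [hd0, hd1, one_smul, hT₁0, smul_smul, hphase]
        congr 1
        field_simp
      | Nat.succ m =>
        rw [hTn (m+1) (by omega), diagU_e d hd, diagU_e d hd, map_smul,
          hT₁n (m+1) (by omega)]
        simp [hddef]
    have hcont1 : Continuous fun x : H => (diagU d hd) (T x) :=
      (diagU d hd).continuous.comp T.continuous
    have hcont2 : Continuous fun x : H => T₁ ((diagU d hd) x) :=
      T₁.continuous.comp (diagU d hd).continuous
    have heqOn : Set.EqOn (fun x : H => (diagU d hd) (T x)) (fun x => T₁ ((diagU d hd) x))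
        ↑(Submodule.span ℂ (Set.range e)) := by
      intro x hx
      exact LinearMap.eqOn_span
        (f := ((diagU d hd).toLinearEquiv.toLinearMap).comp (T : H →ₗ[ℂ] H))
        (g := (T₁ : H →ₗ[ℂ] H).comp ((diagU d hd).toLinearEquiv.toLinearMap))
        (by rintro _ ⟨n, rfl⟩; exact hbase n) hx
    exact fun x => congrFun (Continuous.ext_on dense_span_e hcont1 hcont2 heqOn) x

end
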